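/- For b1, b2, b3 ∈ ℂ let B4_{b1,b2,b3} denote the ℂ-vector space with basis {L, W, x} equipped with the operations extending W(1,0) by x∘L = x, L∘x = (b2 − b1b2)·L + b3·W + b1·x, x∘W = 0, W∘x = b2·W, x∘x = −b1b2²·L + b2b3·W + (b1b2 + b2)·x, [x,L] = 0, [x,W] = 0. Then: (i) B4_{b1,b2,b3} is a Gel'fand-Dorfman bialgebra containing W(1,0) as a subalgebra; (ii) B4_{b1,b2,b3} is equivalent to B4_{b1',b2',b3'} if and only if there exist c1, c2 ∈ ℂ and β ∈ ℂ* with b1 = b1', b2 = β·b2' + c1 and b3 = β·b3' − b1·c2; (iii) consequently, the equivalence classes in this family are represented exactly by B4_{0,0,0}, B4_{0,0,1}, and B4_{b1,0,0} for b1 ∈ ℂ*. -/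

import Mathlib

namespace GDExt

def IsNovikov {M : Type*} [AddCommGroup M] (mul : M → M → M) : Prop :=
  (∀ a b c, mul (mul a b) c - mul a (mul b c) = mul (mul b a) c - mul b (mul a c)) ∧
  ∀ a b c, mul (mul a b) c = mul (mul a c) b

def IsLieBracket {M : Type*} [AddCommGroup M] (br : M → M → M) : Prop :=
  (∀ a, br a a = 0) ∧ ∀ a b c, br a (br b c) = br (br a b) c + br b (br a c)

def IsGD {M : Type*} [AddCommGroup M] (mul br : M → M → M) : Prop :=
  IsNovikov mul ∧ IsLieBracket br ∧
  ∀ a b c, br a (mul b c) - br c (mul b a) + mul (br b a) c - mul (br b c) a - mul b (br a c) = 0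

variable {K : Type*} [Field K]
variable {A V : Type*} [AddCommGroup A] [Module K A] [AddCommGroup V] [Module K V]

/-- First component bilinear product of the unified product `A ♮ V`. -/
def uniMul (circ : A →ₗ[K] A →ₗ[K] A) (lA rA : A →ₗ[K] Module.End K V)
    (lV rV : V →ₗ[K] Module.End K A) (f : V →ₗ[K] V →ₗ[K] A)
    (st : V →ₗ[K] V →ₗ[K] V) : A × V → A × V → A × V :=
  fun p q =>
    (circ p.1 q.1 + lV p.2 q.1 + rV q.2 p.1 + f p.2 q.2,
     st p.2 q.2 + lA p.1 q.2 + rA q.1 p.2)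

/-- Bracket of the unified product `A ♮ V`. -/
def uniBr (brk : A →ₗ[K] A →ₗ[K] A) (tl : V →ₗ[K] A →ₗ[K] V) (tr : V →ₗ[K] A →ₗ[K] A)
    (hm : V →ₗ[K] V →ₗ[K] A) (vbr : V →ₗ[K] V →ₗ[K] V) : A × V → A × V → A × V :=
  fun p q =>
    (brk p.1 q.1 + tr p.2 q.1 - tr q.2 p.1 + hm p.2 q.2,
     vbr p.2 q.2 + tl p.2 q.1 - tl q.2 p.1)

end GDExt

namespace GDExt

/-- Equivalence of GD bialgebra structures on `ℂL ⊕ ℂW ⊕ ℂx` (coordinates `0 ↦ L`,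
`1 ↦ W`, `2 ↦ x`): a GD bialgebra isomorphism restricting to the identity on
`ℂL ⊕ ℂW`. -/
def GDequiv3 (m br m' br' : (Fin 3 → ℂ) → (Fin 3 → ℂ) → (Fin 3 → ℂ)) : Prop :=
  ∃ φ : (Fin 3 → ℂ) ≃ₗ[ℂ] (Fin 3 → ℂ),
    (∀ u v, φ (m u v) = m' (φ u) (φ v)) ∧
    (∀ u v, φ (br u v) = br' (φ u) (φ v)) ∧
    (∀ u : Fin 3 → ℂ, u 2 = 0 → φ u = u)

end GDExt

namespace GDExt

/-- The Novikov product of `B4_{b1,b2,b3}` in the basis `L = e0, W = e1, x = e2`. -/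
def B4mul (b1 b2 b3 : ℂ) : (Fin 3 → ℂ) → (Fin 3 → ℂ) → (Fin 3 → ℂ) :=
  fun u v =>
    ![u 0 * v 0 + (b2 - b1 * b2) * (u 0 * v 2) - b1 * b2 ^ 2 * (u 2 * v 2),
      b3 * (u 0 * v 2) + u 1 * v 0 + b2 * (u 1 * v 2) + b2 * b3 * (u 2 * v 2),
      b1 * (u 0 * v 2) + u 2 * v 0 + (b1 * b2 + b2) * (u 2 * v 2)]

/-- The Lie bracket of `B4_{b1,b2,b3}` (identically zero). -/
def B4br : (Fin 3 → ℂ) → (Fin 3 → ℂ) → (Fin 3 → ℂ) :=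
  fun _ _ => 0

noncomputable def Phi (c1 c2 β : ℂ) (hβ : β ≠ 0) : (Fin 3 → ℂ) ≃ₗ[ℂ] (Fin 3 → ℂ) where
  toFun u := ![u 0 + c1 * u 2, u 1 + c2 * u 2, β * u 2]
  invFun u := ![u 0 - c1 / β * u 2, u 1 - c2 / β * u 2, u 2 / β]
  map_add' u v := by funext i; fin_cases i <;> simp <;> ring
  map_smul' r u := by funext i; fin_cases i <;> simp <;> ring
  left_inv u := by
    funext i
    fin_cases i <;> simp <;> field_simp <;> try ring
  right_inv u := by
    funext i
    fin_cases i <;> simp <;> field_simp <;> try ring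

lemma Phi_apply (c1 c2 β : ℂ) (hβ : β ≠ 0) (u : Fin 3 → ℂ) :
    Phi c1 c2 β hβ u = ![u 0 + c1 * u 2, u 1 + c2 * u 2, β * u 2] := rfl

lemma B4_backward (b1 b2' b3' c1 c2 β : ℂ) (hβ : β ≠ 0) :
    GDequiv3 (B4mul b1 (β * b2' + c1) (β * b3' - b1 * c2)) B4br (B4mul b1 b2' b3') B4br := by
  refine ⟨Phi c1 c2 β hβ, fun u v => ?_, fun u v => ?_, fun u hu => ?_⟩
  · funext i
    fin_cases i <;> simp [Phi_apply, B4mul] <;> ring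
  · simp [B4br]
  · funext i
    fin_cases i <;> simp [Phi_apply, hu]

lemma B4_forward (b1 b2 b3 b1' b2' b3' : ℂ)
    (h : GDequiv3 (B4mul b1 b2 b3) B4br (B4mul b1' b2' b3') B4br) :
    ∃ c1 c2 β : ℂ, β ≠ 0 ∧ b1 = b1' ∧ b2 = β * b2' + c1 ∧ b3 = β * b3' - b1 * c2 := by
  obtain ⟨φ, hm, -, hid⟩ := h
  set p : Fin 3 → ℂ := φ ![0,0,1] with hp
  have hβ : p 2 ≠ 0 := by
    intro h0
    have h2 : φ ![0,0,1] = ![0,0,1] := φ.injective (hid _ h0)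
    rw [hp, h2] at h0
    simp at h0
  have hphi : ∀ v : Fin 3 → ℂ,
      φ v = ![v 0 + p 0 * v 2, v 1 + p 1 * v 2, p 2 * v 2] := by
    intro v
    have hdec : v = (![v 0, v 1, 0] : Fin 3 → ℂ) + v 2 • ![0,0,1] := by
      funext i; fin_cases i <;> simp
    rw [hdec, map_add, map_smul, hid ![v 0, v 1, 0] (by simp), ← hp]
    funext i; fin_cases i <;> simp <;> ring
  refine ⟨p 0, p 1, p 2, hβ, ?_, ?_, ?_⟩
  · have h1 := congrFun (hm ![1,0,0] ![0,0,1]) 2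
    simp only [hphi] at h1
    simp [B4mul] at h1
    exact mul_right_cancel₀ hβ (by linear_combination h1)
  · have h2 := congrFun (hm ![0,1,0] ![0,0,1]) 1
    simp only [hphi] at h2
    simp [B4mul] at h2
    linear_combination h2
  · have h3 := congrFun (hm ![1,0,0] ![0,0,1]) 1
    simp only [hphi] at h3
    simp [B4mul] at h3
    linear_combination h3

lemma B4_equivIff (b1 b2 b3 b1' b2' b3' : ℂ) :
    GDequiv3 (B4mul b1 b2 b3) B4br (B4mul b1' b2' b3') B4br ↔
      ∃ c1 c2 β : ℂ, β ≠ 0 ∧ b1 = b1' ∧ b2 = β * b2' + c1 ∧ b3 = β * b3' - b1 * c2 := by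
  constructor
  · exact B4_forward b1 b2 b3 b1' b2' b3'
  · rintro ⟨c1, c2, β, hβ, rfl, rfl, rfl⟩
    exact B4_backward b1 b2' b3' c1 c2 β hβ

/-- Case B4. -/
theorem caseB4 :
    (∀ b1 b2 b3 : ℂ, IsGD (B4mul b1 b2 b3) B4br ∧
      ∀ u v : Fin 3 → ℂ, u 2 = 0 → v 2 = 0 →
        B4mul b1 b2 b3 u v = ![u 0 * v 0, u 1 * v 0, 0] ∧
        B4br u v = 0) ∧
    (∀ b1 b2 b3 b1' b2' b3' : ℂ,
      GDequiv3 (B4mul b1 b2 b3) B4br (B4mul b1' b2' b3') B4br ↔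
        ∃ c1 c2 β : ℂ, β ≠ 0 ∧ b1 = b1' ∧ b2 = β * b2' + c1 ∧ b3 = β * b3' - b1 * c2) ∧
    -- (iii) the equivalence classes are represented exactly by
    -- B4_{0,0,0}, B4_{0,0,1} and B4_{b1,0,0} for b1 ≠ 0
    (∀ b1 b2 b3 : ℂ,
      GDequiv3 (B4mul b1 b2 b3) B4br (B4mul 0 0 0) B4br ∨
      GDequiv3 (B4mul b1 b2 b3) B4br (B4mul 0 0 1) B4br ∨
      ∃ c : ℂ, c ≠ 0 ∧ GDequiv3 (B4mul b1 b2 b3) B4br (B4mul c 0 0) B4br) ∧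
    ¬ GDequiv3 (B4mul 0 0 0) B4br (B4mul 0 0 1) B4br ∧
    (∀ c : ℂ, c ≠ 0 →
      ¬ GDequiv3 (B4mul 0 0 0) B4br (B4mul c 0 0) B4br ∧
      ¬ GDequiv3 (B4mul 0 0 1) B4br (B4mul c 0 0) B4br) ∧
    (∀ c c' : ℂ, c ≠ 0 → c' ≠ 0 →
      (GDequiv3 (B4mul c 0 0) B4br (B4mul c' 0 0) B4br ↔ c = c')) := by
  refine ⟨fun b1 b2 b3 => ⟨?_, fun u v hu hv => ⟨?_, rfl⟩⟩, B4_equivIff, ?_, ?_, ?_, ?_⟩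
  · refine ⟨⟨fun a b c => ?_, fun a b c => ?_⟩, ⟨fun a => rfl, fun a b c => by simp [B4br]⟩,
      fun a b c => ?_⟩
    · funext i; fin_cases i <;> simp [B4mul] <;> ring
    · funext i; fin_cases i <;> simp [B4mul] <;> ring
    · funext i; fin_cases i <;> simp [B4mul, B4br]
  · funext i; fin_cases i <;> simp [B4mul, hu, hv]
  · intro b1 b2 b3
    by_cases h1 : b1 = 0
    · subst h1
      by_cases h3 : b3 = 0
      · subst h3
        exact Or.inl ((B4_equivIff _ _ _ _ _ _).mpr ⟨b2, 0, 1, one_ne_zero, rfl, by ring, by ring⟩)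
      · exact Or.inr (Or.inl ((B4_equivIff _ _ _ _ _ _).mpr
          ⟨b2, 0, b3, h3, rfl, by ring, by ring⟩))
    · exact Or.inr (Or.inr ⟨b1, h1, (B4_equivIff _ _ _ _ _ _).mpr
        ⟨b2, -b3 / b1, 1, one_ne_zero, rfl, by ring, by field_simp; ring⟩⟩)
  · intro h
    obtain ⟨c1, c2, β, hβ, -, -, h3⟩ := (B4_equivIff _ _ _ _ _ _).mp h
    apply hβ
    linear_combination -h3
  · intro c hc
    constructor
    · intro h
      obtain ⟨c1, c2, β, hβ, h1, -, -⟩ := (B4_equivIff _ _ _ _ _ _).mp h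
      exact hc h1.symm
    · intro h
      obtain ⟨c1, c2, β, hβ, h1, -, -⟩ := (B4_equivIff _ _ _ _ _ _).mp h
      exact hc h1.symm
  · intro c c' hc hc'
    constructor
    · intro h
      obtain ⟨c1, c2, β, hβ, h1, -, -⟩ := (B4_equivIff _ _ _ _ _ _).mp h
      exact h1
    · rintro rfl
      exact (B4_equivIff _ _ _ _ _ _).mpr ⟨0, 0, 1, one_ne_zero, rfl, by ring, by ring⟩

end GDExt
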